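/- Let x_0 > x_1 > ... > x_n be distinct real numbers, let 0 ≤ k ≤ n-1, and let x be a real number with x_{k+1} < x < x_k. Then (x_k - x)(x - x_{k+1}) · Σ_{i=0}^n 1/|x - x_i| ≤ (x_k - x_{k+1}) · (1 + Σ_{i=0}^{k-1} (x_k - x_{k+1})/(x_i - x_{k+1}) + Σ_{i=k+2}^{n} (x_k - x_{k+1})/(x_k - x_i)). -/

import Mathlib

open Finset Real

/-- Upper bound for the numerator factor `N_k(x)` appearing in the Lebesgue function
of Berrut's rational interpolant on the subinterval `(x_{k+1}, x_k)` of decreasing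
nodes `x_0 > x_1 > ... > x_n`. -/
theorem berrut_numerator_bound
    (n : ℕ) (x : ℕ → ℝ)
    (hdec : ∀ i, i < n → x (i + 1) < x i)
    (k : ℕ) (hk : k + 1 ≤ n)
    (t : ℝ) (ht1 : x (k + 1) < t) (ht2 : t < x k) :
    (x k - t) * (t - x (k + 1)) * ∑ i ∈ Finset.range (n + 1), 1 / |t - x i| ≤
      (x k - x (k + 1)) *
        (1 + (∑ i ∈ Finset.range k, (x k - x (k + 1)) / (x i - x (k + 1))) +
          ∑ i ∈ Finset.Icc (k + 2) n, (x k - x (k + 1)) / (x k - x i)) := by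
  have hmono : ∀ i j, i < j → j ≤ n → x j < x i := by
    intro i j hij hjn
    induction j with
    | zero => omega
    | succ m ih =>
      rcases Nat.lt_succ_iff_lt_or_eq.mp hij with h | h
      · exact lt_trans (hdec m (by omega)) (ih h (by omega))
      · subst h; exact hdec i (by omega)
  set a := x (k + 1) with ha
  set b := x k with hb
  have hab : a < b := lt_trans ht1 ht2
  have hbt : (0:ℝ) < b - t := by linarith
  have hta : (0:ℝ) < t - a := by linarith
  have hsplit : Finset.range (n + 1) = Finset.range (k + 2) ∪ Finset.Icc (k + 2) n := by
    ext i
    simp only [Finset.mem_range, Finset.mem_union, Finset.mem_Icc]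
    omega
  have hdisj : Disjoint (Finset.range (k + 2)) (Finset.Icc (k + 2) n) := by
    simp only [Finset.disjoint_left, Finset.mem_range, Finset.mem_Icc]
    omega
  rw [hsplit, Finset.sum_union hdisj, Finset.sum_range_succ, Finset.sum_range_succ]
  have habs_b : |t - b| = b - t := by rw [abs_of_neg (by linarith)]; ring
  have habs_a : |t - a| = t - a := abs_of_pos (by linarith)
  rw [habs_a, habs_b]
  have h1 : (b - t) * (t - a) * ∑ i ∈ Finset.range k, 1 / |t - x i| ≤
      (b - a) * ∑ i ∈ Finset.range k, (b - a) / (x i - a) := by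
    rw [Finset.mul_sum, Finset.mul_sum]
    apply Finset.sum_le_sum
    intro i hi
    have hxi : b < x i := hmono i k (Finset.mem_range.mp hi) (by omega)
    have habs : |t - x i| = x i - t := by rw [abs_of_neg (by linarith)]; ring
    rw [habs, mul_one_div, mul_div_assoc']
    rw [div_le_div_iff₀ (by linarith) (by linarith)]
    have e1 : (b - t) * (x i - a) ≤ (b - a) * (x i - t) := by
      nlinarith [mul_nonneg hta.le (show (0:ℝ) ≤ x i - b by linarith)]
    have e2 := mul_le_mul_of_nonneg_left e1 hta.le
    have e3 : (t - a) * ((b - a) * (x i - t)) ≤ (b - a) * ((b - a) * (x i - t)) :=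
      mul_le_mul_of_nonneg_right (by linarith)
        (mul_nonneg (by linarith) (by linarith))
    nlinarith [e2, e3]
  have h2 : (b - t) * (t - a) * ∑ i ∈ Finset.Icc (k + 2) n, 1 / |t - x i| ≤
      (b - a) * ∑ i ∈ Finset.Icc (k + 2) n, (b - a) / (b - x i) := by
    rw [Finset.mul_sum, Finset.mul_sum]
    apply Finset.sum_le_sum
    intro i hi
    have hic := Finset.mem_Icc.mp hi
    have hxi : x i < a := hmono (k + 1) i (by omega) (by omega)
    have habs : |t - x i| = t - x i := abs_of_pos (by linarith)
    rw [habs, mul_one_div, mul_div_assoc']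
    rw [div_le_div_iff₀ (by linarith) (by linarith)]
    have e1 : (t - a) * (b - x i) ≤ (b - a) * (t - x i) := by
      nlinarith [mul_nonneg hbt.le (show (0:ℝ) ≤ a - x i by linarith)]
    have e2 := mul_le_mul_of_nonneg_left e1 hbt.le
    have e3 : (b - t) * ((b - a) * (t - x i)) ≤ (b - a) * ((b - a) * (t - x i)) :=
      mul_le_mul_of_nonneg_right (by linarith)
        (mul_nonneg (by linarith) (by linarith))
    nlinarith [e2, e3]
  have hmid : (b - t) * (t - a) * (1 / (b - t) + 1 / (t - a)) = b - a := by
    field_simp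
    ring
  calc (b - t) * (t - a) *
        ((∑ i ∈ Finset.range k, 1 / |t - x i| + 1 / (b - t) + 1 / (t - a)) +
          ∑ i ∈ Finset.Icc (k + 2) n, 1 / |t - x i|)
      = (b - t) * (t - a) * ∑ i ∈ Finset.range k, 1 / |t - x i| +
        (b - t) * (t - a) * (1 / (b - t) + 1 / (t - a)) +
        (b - t) * (t - a) * ∑ i ∈ Finset.Icc (k + 2) n, 1 / |t - x i| := by ring
    _ ≤ (b - a) * ∑ i ∈ Finset.range k, (b - a) / (x i - a) + (b - a) +
        (b - a) * ∑ i ∈ Finset.Icc (k + 2) n, (b - a) / (b - x i) := by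
        rw [hmid]
        exact add_le_add (add_le_add h1 le_rfl) h2
    _ = (b - a) * (1 + (∑ i ∈ Finset.range k, (b - a) / (x i - a)) +
          ∑ i ∈ Finset.Icc (k + 2) n, (b - a) / (b - x i)) := by ring
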